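/- Let s be a solution not containing item i, and assume v_max − ν·(W(s) + w_i) > 0. Then B(s ∪ {i}) ≥ B(s) if and only if W(s) ≤ w_{e_i}, and B(s ∪ {i}) > B(s) if and only if W(s) < w_{e_i}. -/

import Mathlib

/-- Total weight of a solution (subset of items). -/
noncomputable def pwtW (w : ℕ → ℝ) (s : Finset ℕ) : ℝ := ∑ i ∈ s, w i

/-- Total profit of a solution. -/
noncomputable def pwtP (p : ℕ → ℝ) (s : Finset ℕ) : ℝ := ∑ i ∈ s, p i

/-- Benefit of a solution: profit minus travel cost. -/
noncomputable def pwtB (w p : ℕ → ℝ) (R d vmax ν : ℝ) (s : Finset ℕ) : ℝ :=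
  pwtP p s - R * d / (vmax - ν * pwtW w s)

/-- Threshold weight `w_{e_i}` of item `i`. -/
noncomputable def pwtThr (w p : ℕ → ℝ) (R d vmax ν : ℝ) (i : ℕ) : ℝ :=
  vmax / ν - w i / 2 * (1 + Real.sqrt (1 + 4 * R * d / (ν * w i * p i)))

theorem pwt_add_benefit_iff_threshold
    (n : ℕ) (w p : ℕ → ℝ) (R d vmin vmax C ν : ℝ)
    (hw : ∀ j ∈ Finset.Icc 1 n, 0 < w j) (hp : ∀ j ∈ Finset.Icc 1 n, 0 < p j)
    (hR : 0 < R) (hd : 0 < d) (hvmin : 0 < vmin) (hv : vmin < vmax)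
    (hC : 0 < C) (hν : ν = (vmax - vmin) / C)
    (s : Finset ℕ) (hs : s ⊆ Finset.Icc 1 n)
    (i : ℕ) (hi : i ∈ Finset.Icc 1 n) (his : i ∉ s)
    (hpos : 0 < vmax - ν * (pwtW w s + w i)) :
    (pwtB w p R d vmax ν s ≤ pwtB w p R d vmax ν (insert i s) ↔
      pwtW w s ≤ pwtThr w p R d vmax ν i) ∧
    (pwtB w p R d vmax ν s < pwtB w p R d vmax ν (insert i s) ↔
      pwtW w s < pwtThr w p R d vmax ν i) := by
  have hwi : 0 < w i := hw i hi
  have hpi : 0 < p i := hp i hi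
  have hνpos : 0 < ν := by rw [hν]; exact div_pos (by linarith) hC
  set W := pwtW w s with hW
  set x := vmax - ν * W with hx
  have hx1 : 0 < x - ν * w i := by
    have : vmax - ν * (W + w i) = x - ν * w i := by rw [hx]; ring
    linarith [hpos, this]
  have hνwi : 0 < ν * w i := mul_pos hνpos hwi
  have hx0 : 0 < x := by linarith
  set t := Real.sqrt (1 + 4 * R * d / (ν * w i * p i)) with ht
  have ht2 : t ^ 2 = 1 + 4 * R * d / (ν * w i * p i) := by
    rw [ht]; exact Real.sq_sqrt (by positivity)
  clear_value W x t
  have hq : t ^ 2 * (ν * w i * p i) = ν * w i * p i + 4 * (R * d) := by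
    rw [ht2]; field_simp
  have ht1 : 1 < t := by
    have harg : 0 < 4 * R * d / (ν * w i * p i) := by positivity
    have h1 : 1 < t ^ 2 := by rw [ht2]; linarith
    nlinarith [Real.sqrt_nonneg (1 + 4 * R * d / (ν * w i * p i))]
  have hWins : pwtW w (insert i s) = W + w i := by
    rw [hW]; simp [pwtW, Finset.sum_insert his]; ring
  have hPins : pwtP p (insert i s) = pwtP p s + p i := by
    simp [pwtP, Finset.sum_insert his]; ring
  have hD : 0 < x * (x - ν * w i) := mul_pos hx0 hx1
  have hBdiff : pwtB w p R d vmax ν (insert i s) - pwtB w p R d vmax ν s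
      = (p i * (x * (x - ν * w i)) - R * d * (ν * w i)) / (x * (x - ν * w i)) := by
    rw [pwtB, pwtB, hWins, hPins, ← hW]
    have e1 : vmax - ν * (W + w i) = x - ν * w i := by rw [hx]; ring
    rw [e1, ← hx]
    field_simp
    ring
  have hfact : p i * (x * (x - ν * w i)) - R * d * (ν * w i)
      = (x - ν * w i / 2 * (1 + t)) * (p i * (x - ν * w i / 2 * (1 - t))) := by
    linear_combination (ν * w i / 4) * hq
  have hb : 0 < p i * (x - ν * w i / 2 * (1 - t)) := by
    have h1 : ν * w i / 2 * (1 - t) < 0 := by nlinarith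
    have : 0 < x - ν * w i / 2 * (1 - t) := by linarith
    exact mul_pos hpi this
  have hthr : pwtThr w p R d vmax ν i = vmax / ν - w i / 2 * (1 + t) := by
    rw [pwtThr, ← ht]
  have hνthr : ν * pwtThr w p R d vmax ν i = vmax - ν * w i / 2 * (1 + t) := by
    rw [hthr]; field_simp
  have hiff : ∀ y : ℝ, (W ≤ y ↔ ν * W ≤ ν * y) := fun y =>
    (mul_le_mul_iff_right₀ hνpos).symm
  constructor
  · rw [← sub_nonneg, hBdiff, le_div_iff₀ hD, zero_mul, hfact,
      mul_nonneg_iff_of_pos_right hb, hiff (pwtThr w p R d vmax ν i), hνthr]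
    constructor <;> intro h <;> linarith
  · rw [← sub_pos, hBdiff, lt_div_iff₀ hD, zero_mul, hfact,
      mul_pos_iff_of_pos_right hb,
      show (W < pwtThr w p R d vmax ν i) ↔ ν * W < ν * pwtThr w p R d vmax ν i from
        (mul_lt_mul_iff_right₀ hνpos).symm, hνthr]
    constructor <;> intro h <;> linarith
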